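/- Let K be a field of characteristic zero and 𝔸_n = 𝔸₁^{⊗n} the n-th Jacobian algebra. Then F^{⊗n} is the smallest nonzero two-sided ideal of 𝔸_n, (F^{⊗n})² = F^{⊗n}, and consequently 𝔸_n is a prime ring. -/

import Mathlib

set_option synthInstance.maxHeartbeats 1000000
set_option maxHeartbeats 1000000

open MvPolynomial
set_option linter.unusedSectionVars false

/-- Multiplication by `x i` on the polynomial algebra. -/
noncomputable def xO (K : Type*) [Field K] (n : ℕ) (i : Fin n) :
    Module.End K (MvPolynomial (Fin n) K) :=
  LinearMap.mulLeft K (MvPolynomial.X i)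

/-- The partial derivative `∂ i` on the polynomial algebra. -/
noncomputable def dO (K : Type*) [Field K] (n : ℕ) (i : Fin n) :
    Module.End K (MvPolynomial (Fin n) K) :=
  (MvPolynomial.pderiv i).toLinearMap

/-- The Jacobian algebra `𝔸ₙ`: the subalgebra of `End_K(K[x₁,…,xₙ])` generated by the
Weyl algebra (i.e. the `xᵢ` and `∂ᵢ`) together with the inverses of the `Hᵢ = ∂ᵢ xᵢ`. -/
noncomputable def An (K : Type*) [Field K] (n : ℕ) :
    Subalgebra K (Module.End K (MvPolynomial (Fin n) K)) :=
  Algebra.adjoin K (Set.range (xO K n) ∪ Set.range (dO K n) ∪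
    {g | ∃ i, g * (dO K n i * xO K n i) = 1 ∧ (dO K n i * xO K n i) * g = 1})

/-- `I` is a two-sided ideal (as a `K`-submodule, which is automatic for ideals of a
unital `K`-algebra with central `K`). -/
def IsTwoSided {K A : Type*} [CommSemiring K] [Ring A] [Algebra K A]
    (I : Submodule K A) : Prop :=
  ∀ a ∈ I, ∀ r : A, r * a ∈ I ∧ a * r ∈ I

/-- A prime (two-sided) ideal: proper, and `I*J ⊆ P` implies `I ⊆ P` or `J ⊆ P`. -/
def IsPrimeIdeal {K A : Type*} [CommSemiring K] [Ring A] [Algebra K A]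
    (P : Submodule K A) : Prop :=
  P ≠ ⊤ ∧ IsTwoSided P ∧
    ∀ I J : Submodule K A, IsTwoSided I → IsTwoSided J → I * J ≤ P → I ≤ P ∨ J ≤ P

/-- The carrier of the height-one prime `𝔭ᵢ = 𝔸₁^{⊗(i−1)} ⊗ F ⊗ 𝔸₁^{⊗(n−i)}`:
operators in `𝔸ₙ` vanishing on `xᵢ^m · K[x₁,…,xₙ]` for some `m`. -/
def pCar (K : Type*) [Field K] (n : ℕ) (i : Fin n) : Set ↥(An K n) :=
  {a | ∃ m : ℕ, ∀ p : MvPolynomial (Fin n) K,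
    (a : Module.End K (MvPolynomial (Fin n) K)) (MvPolynomial.X i ^ m * p) = 0}

section Aux
variable {K : Type*} [Field K] [CharZero K] {n : ℕ}

noncomputable def BB (K : Type*) [Field K] (n : ℕ) :
    Module.Basis (Fin n →₀ ℕ) K (MvPolynomial (Fin n) K) :=
  MvPolynomial.basisMonomials _ _

lemma BB_apply (α : Fin n →₀ ℕ) : BB K n α = monomial α (1 : K) := by
  rw [BB, coe_basisMonomials]

lemma endext {f g : Module.End K (MvPolynomial (Fin n) K)}
    (h : ∀ α : Fin n →₀ ℕ, f (monomial α (1 : K)) = g (monomial α (1 : K))) : f = g :=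
  (BB K n).ext fun α => by rw [BB_apply]; exact h α

noncomputable def diag (c : (Fin n →₀ ℕ) → K) : Module.End K (MvPolynomial (Fin n) K) :=
  (BB K n).constr K fun α => c α • monomial α (1 : K)

lemma diag_monomial (c : (Fin n →₀ ℕ) → K) (α : Fin n →₀ ℕ) :
    diag c (monomial α (1 : K)) = c α • monomial α (1 : K) := by
  rw [← BB_apply, diag, Module.Basis.constr_basis, BB_apply]

lemma diag_mul (c d : (Fin n →₀ ℕ) → K) :
    diag c * diag d = diag fun α => c α * d α := endext fun α => by
  rw [Module.End.mul_apply, diag_monomial, map_smul, diag_monomial, diag_monomial, smul_smul,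
    mul_comm]

lemma diag_one : diag (fun _ => (1 : K)) = (1 : Module.End K (MvPolynomial (Fin n) K)) :=
  endext fun α => by rw [diag_monomial, one_smul]; rfl

lemma diag_zero : (diag (fun _ => (0 : K)) : Module.End K (MvPolynomial (Fin n) K)) = 0 :=
  endext fun α => by rw [diag_monomial, zero_smul]; rfl

lemma xO_monomial (i : Fin n) (α : Fin n →₀ ℕ) :
    xO K n i (monomial α (1 : K)) = monomial (Finsupp.single i 1 + α) (1 : K) := by
  rw [xO, LinearMap.mulLeft_apply, ← pow_one (X i), ← monomial_single_add]

lemma dO_monomial (i : Fin n) (α : Fin n →₀ ℕ) :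
    dO K n i (monomial α (1 : K)) = (α i : K) • monomial (α - Finsupp.single i 1) (1 : K) := by
  show (pderiv i) (monomial α (1:K)) = _
  rw [pderiv_monomial, smul_monomial, one_mul, smul_eq_mul, mul_one]

lemma H_monomial (i : Fin n) (α : Fin n →₀ ℕ) :
    (dO K n i * xO K n i) (monomial α (1 : K)) = ((α i : K) + 1) • monomial α (1 : K) := by
  rw [Module.End.mul_apply, xO_monomial, dO_monomial]
  congr 1
  · rw [Finsupp.add_apply, Finsupp.single_eq_same]; push_cast; ring
  · rw [add_tsub_cancel_left]

/-- the inverse of `Hᵢ = ∂ᵢ xᵢ`. -/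
noncomputable def hInv (i : Fin n) : Module.End K (MvPolynomial (Fin n) K) :=
  diag fun α => ((α i : K) + 1)⁻¹

lemma hInv_mul_H (i : Fin n) : (hInv i : Module.End K (MvPolynomial (Fin n) K)) *
    (dO K n i * xO K n i) = 1 := endext fun α => by
  rw [Module.End.mul_apply, H_monomial, map_smul, hInv, diag_monomial, smul_smul,
    mul_inv_cancel₀ (Nat.cast_add_one_ne_zero (α i)), one_smul]
  rfl

lemma H_mul_hInv (i : Fin n) : (dO K n i * xO K n i) *
    (hInv i : Module.End K (MvPolynomial (Fin n) K)) = 1 := endext fun α => by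
  rw [Module.End.mul_apply, hInv, diag_monomial, map_smul, H_monomial, smul_smul,
    inv_mul_cancel₀ (Nat.cast_add_one_ne_zero (α i)), one_smul]
  rfl

lemma xO_mem (i : Fin n) : xO K n i ∈ An K n :=
  Algebra.subset_adjoin (Or.inl (Or.inl ⟨i, rfl⟩))

lemma dO_mem (i : Fin n) : dO K n i ∈ An K n :=
  Algebra.subset_adjoin (Or.inl (Or.inr ⟨i, rfl⟩))

lemma hInv_mem (i : Fin n) : (hInv i : Module.End K (MvPolynomial (Fin n) K)) ∈ An K n :=
  Algebra.subset_adjoin (Or.inr ⟨i, hInv_mul_H i, H_mul_hInv i⟩)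


/-- the projection onto constants -/
noncomputable def eP (K : Type*) [Field K] (n : ℕ) : Module.End K (MvPolynomial (Fin n) K) :=
  diag fun α => if α = 0 then (1 : K) else 0

lemma factor_eq (i : Fin n) :
    1 - xO K n i * hInv i * dO K n i = diag fun α => if α i = 0 then (1 : K) else 0 := by
  refine endext fun α => ?_
  rw [LinearMap.sub_apply, Module.End.mul_apply, Module.End.mul_apply, dO_monomial, map_smul,
    map_smul, hInv, diag_monomial, map_smul, xO_monomial, diag_monomial, Module.End.one_apply]
  rcases Nat.eq_zero_or_pos (α i) with h | h
  · rw [h, if_pos rfl, one_smul, Nat.cast_zero, zero_smul, sub_zero]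
  · have h1 : Finsupp.single i 1 + (α - Finsupp.single i 1) = α :=
      add_tsub_cancel_of_le (Finsupp.single_le_iff.mpr h)
    have h2 := Finsupp.tsub_apply α (Finsupp.single i 1) i
    rw [Finsupp.single_eq_same] at h2
    rw [if_neg h.ne', zero_smul, h1, h2, smul_smul]
    have h3 : ((α i : K) * (((α i - 1 : ℕ) : K) + 1)⁻¹) = 1 := by
      have h4 : (((α i - 1 : ℕ) : K) + 1) = (α i : K) := by
        rw [← Nat.cast_add_one, Nat.sub_add_cancel h]
      rw [h4, mul_inv_cancel₀ (by exact_mod_cast h.ne')]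
    rw [h3, one_smul, sub_self]

lemma diag_list_prod (l : List (Fin n)) (f : Fin n → (Fin n →₀ ℕ) → K) :
    ((l.map fun j => diag (f j)).prod : Module.End K (MvPolynomial (Fin n) K)) =
      diag fun α => (l.map fun j => f j α).prod := by
  induction l with
  | nil => simpa using (diag_one (K := K) (n := n)).symm
  | cons a t ih =>
    simp only [List.map_cons, List.prod_cons, ih, diag_mul]

lemma eP_eq_prod : eP K n =
    ((List.finRange n).map fun i => 1 - xO K n i * hInv i * dO K n i).prod := by
  have : ((List.finRange n).map fun i => 1 - xO K n i * hInv i * dO K n i :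
      List (Module.End K (MvPolynomial (Fin n) K))) =
      (List.finRange n).map fun i => diag fun α => if α i = 0 then (1 : K) else 0 :=
    List.map_congr_left fun i _ => factor_eq i
  rw [this, diag_list_prod, eP]
  congr 1
  funext α
  by_cases h : α = 0
  · subst h
    rw [if_pos rfl]
    refine (List.prod_eq_one fun x hx => ?_).symm
    simp only [List.mem_map] at hx
    obtain ⟨i, _, rfl⟩ := hx
    simp
  · rw [if_neg h]
    obtain ⟨i, hi⟩ : ∃ i, α i ≠ 0 := by
      by_contra hc
      push_neg at hc
      exact h (Finsupp.ext hc)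
    refine (List.prod_eq_zero ?_).symm
    exact List.mem_map.mpr ⟨i, List.mem_finRange i, by rw [if_neg hi]⟩

lemma eP_mem : eP K n ∈ An K n := by
  rw [eP_eq_prod]
  refine list_prod_mem fun x hx => ?_
  simp only [List.mem_map] at hx
  obtain ⟨i, _, rfl⟩ := hx
  exact sub_mem (one_mem _) (mul_mem (mul_mem (xO_mem i) (hInv_mem i)) (dO_mem i))

lemma eP_monomial (α : Fin n →₀ ℕ) :
    eP K n (monomial α (1 : K)) = if α = 0 then monomial α (1 : K) else 0 := by
  rw [eP, diag_monomial]
  split <;> simp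

lemma X_pow_mul_monomial (i : Fin n) (m : ℕ) (α : Fin n →₀ ℕ) (c : K) :
    (X i : MvPolynomial (Fin n) K) ^ m * monomial α c = monomial (Finsupp.single i m + α) c := by
  rw [X_pow_eq_monomial, monomial_mul, one_mul]

lemma diag_shift (c : (Fin n →₀ ℕ) → K) (i : Fin n) (m : ℕ) (p : MvPolynomial (Fin n) K) :
    diag c ((X i) ^ m * p) = (X i) ^ m * diag (fun α => c (Finsupp.single i m + α)) p := by
  have key : (diag c : Module.End K (MvPolynomial (Fin n) K)) ∘ₗ
      LinearMap.mulLeft K ((X i : MvPolynomial (Fin n) K) ^ m) =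
      LinearMap.mulLeft K ((X i : MvPolynomial (Fin n) K) ^ m) ∘ₗ
      diag (fun α => c (Finsupp.single i m + α)) := by
    refine endext fun α => ?_
    rw [LinearMap.comp_apply, LinearMap.comp_apply, LinearMap.mulLeft_apply,
      X_pow_mul_monomial, diag_monomial, diag_monomial, map_smul, LinearMap.mulLeft_apply,
      X_pow_mul_monomial]
  exact DFunLike.congr_fun key p

lemma eP_kills (i : Fin n) (q : MvPolynomial (Fin n) K) : eP K n ((X i) * q) = 0 := by
  have h := diag_shift (fun α => if α = 0 then (1 : K) else 0) i 1 q
  rw [pow_one] at h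
  rw [eP, h]
  have h2 : (fun α => if Finsupp.single i 1 + α = 0 then (1 : K) else 0) = fun _ => (0 : K) := by
    funext α
    rw [if_neg]
    intro hz
    have := DFunLike.congr_fun hz i
    simp at this
  rw [h2, diag_zero, LinearMap.zero_apply, mul_zero]

lemma pow_split (i : Fin n) {m M : ℕ} (h : m ≤ M) (p : MvPolynomial (Fin n) K) :
    (X i : MvPolynomial (Fin n) K) ^ M * p = (X i) ^ m * ((X i) ^ (M - m) * p) := by
  rw [← mul_assoc, ← pow_add, Nat.add_sub_cancel' h]

lemma filter_all {r : Module.End K (MvPolynomial (Fin n) K)} (hr : r ∈ An K n) (i : Fin n)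
    (m : ℕ) : ∃ m', ∀ p, ∃ q, r ((X i) ^ m' * p) = (X i) ^ m * q := by
  induction hr using Algebra.adjoin_induction generalizing m with
  | mem g hg =>
    rcases hg with (⟨j, rfl⟩ | ⟨j, rfl⟩) | ⟨j, hg1, hg2⟩
    · exact ⟨m, fun p => ⟨X j * p, by rw [xO, LinearMap.mulLeft_apply, mul_left_comm]⟩⟩
    · refine ⟨m + 1, fun p =>
        ⟨((m : MvPolynomial (Fin n) K) + 1) * pderiv j (X i) * p + X i * pderiv j p, ?_⟩⟩
      show pderiv j ((X i) ^ (m+1) * p) = _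
      rw [pderiv_mul, pderiv_pow]
      simp only [Nat.add_sub_cancel]
      push_cast
      ring
    · have hg : g = hInv j := by
        have h1 : g = (g * (dO K n j * xO K n j)) * hInv j := by
          rw [mul_assoc, H_mul_hInv, mul_one]
        rw [hg1, one_mul] at h1
        exact h1
      subst hg
      exact ⟨m, fun p => ⟨_, diag_shift _ i m p⟩⟩
  | algebraMap c =>
    refine ⟨m, fun p => ⟨c • p, ?_⟩⟩
    rw [Module.algebraMap_end_apply, mul_smul_comm]
  | add x y hx hy ihx ihy =>
    obtain ⟨m1, h1⟩ := ihx m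
    obtain ⟨m2, h2⟩ := ihy m
    refine ⟨max m1 m2, fun p => ?_⟩
    obtain ⟨q1, hq1⟩ := h1 ((X i) ^ (max m1 m2 - m1) * p)
    obtain ⟨q2, hq2⟩ := h2 ((X i) ^ (max m1 m2 - m2) * p)
    refine ⟨q1 + q2, ?_⟩
    rw [LinearMap.add_apply, pow_split i (le_max_left m1 m2), hq1,
      ← pow_split i (le_max_left m1 m2), pow_split i (le_max_right m1 m2), hq2, mul_add]
  | mul x y hx hy ihx ihy =>
    obtain ⟨m1, h1⟩ := ihx m
    obtain ⟨m2, h2⟩ := ihy m1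
    refine ⟨m2, fun p => ?_⟩
    obtain ⟨q2, hq2⟩ := h2 p
    obtain ⟨q1, hq1⟩ := h1 q2
    exact ⟨q1, by rw [Module.End.mul_apply, hq2, hq1]⟩

/-- multiplication by the monomial `x^α` -/
noncomputable def XPow (α : Fin n →₀ ℕ) : Module.End K (MvPolynomial (Fin n) K) :=
  LinearMap.mulLeft K (monomial α (1 : K))

lemma XPow_monomial (α β : Fin n →₀ ℕ) :
    XPow α (monomial β (1 : K)) = monomial (α + β) (1 : K) := by
  rw [XPow, LinearMap.mulLeft_apply, monomial_mul, one_mul]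

lemma XPow_zero : (XPow 0 : Module.End K (MvPolynomial (Fin n) K)) = 1 := by
  rw [XPow, show (monomial (0 : Fin n →₀ ℕ) (1 : K)) = 1 from rfl, LinearMap.mulLeft_one]
  rfl

lemma monomial_one_eq_prod (α : Fin n →₀ ℕ) :
    (monomial α (1 : K) : MvPolynomial (Fin n) K) = ∏ i : Fin n, (X i) ^ α i := by
  rw [← prod_X_pow_eq_monomial]
  exact Finset.prod_subset (Finset.subset_univ _) fun i _ hi => by
    rw [Finsupp.notMem_support_iff.mp hi, pow_zero]

/-- `mulLeft` as a `MonoidHom` -/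
noncomputable def mulLeftHom : MvPolynomial (Fin n) K →* Module.End K (MvPolynomial (Fin n) K)
    where
  toFun := LinearMap.mulLeft K
  map_one' := by ext p; simp
  map_mul' a b := by ext p; simp [Module.End.mul_apply, mul_assoc]

lemma XPow_mem (α : Fin n →₀ ℕ) : (XPow α : Module.End K (MvPolynomial (Fin n) K)) ∈ An K n := by
  have hm : (monomial α (1 : K) : MvPolynomial (Fin n) K) =
      ((List.finRange n).map fun i => (X i : MvPolynomial (Fin n) K) ^ α i).prod := by
    rw [← Fin.prod_univ_def, monomial_one_eq_prod]
  have hx : (XPow α : Module.End K (MvPolynomial (Fin n) K)) =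
      ((List.finRange n).map fun i => (xO K n i) ^ α i).prod := by
    rw [XPow, show LinearMap.mulLeft K (monomial α (1:K)) = mulLeftHom (monomial α (1:K))
      from rfl, hm, MonoidHom.map_list_prod, List.map_map]
    congr 1
    refine List.map_congr_left fun i _ => ?_
    show mulLeftHom ((X i) ^ α i) = _
    rw [map_pow]
    rfl
  rw [hx]
  exact list_prod_mem fun x hx => by
    simp only [List.mem_map] at hx
    obtain ⟨i, _, rfl⟩ := hx
    exact pow_mem (xO_mem i) _

/-- the operator `∂^α` -/
noncomputable def DPow (α : Fin n →₀ ℕ) : Module.End K (MvPolynomial (Fin n) K) :=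
  ((List.finRange n).map fun i => (dO K n i) ^ α i).prod

lemma DPow_mem (α : Fin n →₀ ℕ) : (DPow α : Module.End K (MvPolynomial (Fin n) K)) ∈ An K n :=
  list_prod_mem fun x hx => by
    simp only [List.mem_map] at hx
    obtain ⟨i, _, rfl⟩ := hx
    exact pow_mem (dO_mem i) _

lemma dO_pow_monomial (i : Fin n) (k : ℕ) (β : Fin n →₀ ℕ) :
    ((dO K n i) ^ k) (monomial β (1 : K)) =
      ((β i).descFactorial k : K) • monomial (β - Finsupp.single i k) (1 : K) := by
  induction k with
  | zero => simp
  | succ k ih =>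
    rw [pow_succ', Module.End.mul_apply, ih, map_smul, dO_monomial]
    have h1 := Finsupp.tsub_apply β (Finsupp.single i k) i
    rw [Finsupp.single_eq_same] at h1
    have h2 : β - Finsupp.single i k - Finsupp.single i 1 = β - Finsupp.single i (k + 1) := by
      rw [tsub_tsub, ← Finsupp.single_add]
    rw [h1, h2, smul_smul, Nat.descFactorial_succ, Nat.cast_mul, mul_comm]

lemma DPow_aux (l : List (Fin n)) (hl : l.Nodup) (α β : Fin n →₀ ℕ) :
    ((l.map fun i => (dO K n i) ^ α i).prod) (monomial β (1 : K)) =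
      (((l.map fun i => (β i).descFactorial (α i)).prod : ℕ) : K) •
        monomial (β - (l.map fun i => Finsupp.single i (α i)).sum) (1 : K) := by
  induction l with
  | nil => simp
  | cons a t ih =>
    obtain ⟨ha, ht⟩ := List.nodup_cons.mp hl
    rw [List.map_cons, List.prod_cons, Module.End.mul_apply, ih ht, map_smul, dO_pow_monomial]
    have hγ : ((t.map fun i => Finsupp.single i (α i)).sum : Fin n →₀ ℕ) a = 0 := by
      rw [← Finsupp.applyAddHom_apply, map_list_sum, List.map_map]
      refine List.sum_eq_zero fun x hx => ?_
      simp only [List.mem_map, Function.comp] at hx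
      obtain ⟨i, hi, rfl⟩ := hx
      exact Finsupp.single_eq_of_ne (fun hia => ha (hia ▸ hi))
    have h1 := Finsupp.tsub_apply β ((t.map fun i => Finsupp.single i (α i)).sum) a
    rw [hγ, Nat.sub_zero] at h1
    have h2 : β - (t.map fun i => Finsupp.single i (α i)).sum - Finsupp.single a (α a) =
        β - ((a :: t).map fun i => Finsupp.single i (α i)).sum := by
      rw [tsub_tsub, List.map_cons, List.sum_cons, add_comm]
    rw [h1, h2, smul_smul]
    simp only [List.map_cons, List.prod_cons, List.sum_cons, Nat.cast_mul]
    rw [mul_comm]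

lemma DPow_monomial (α β : Fin n →₀ ℕ) :
    DPow α (monomial β (1 : K)) =
      ((((List.finRange n).map fun i => (β i).descFactorial (α i)).prod : ℕ) : K) •
        monomial (β - α) (1 : K) := by
  rw [DPow, DPow_aux _ (List.nodup_finRange n)]
  have : ((List.finRange n).map fun i => Finsupp.single i (α i)).sum = α := by
    rw [← Fin.sum_univ_def, Finsupp.univ_sum_single]
  rw [this]

/-- the factorial of a multi-index -/
def mfact (α : Fin n →₀ ℕ) : ℕ := ((List.finRange n).map fun i => (α i).factorial).prod

lemma mfact_ne_zero (α : Fin n →₀ ℕ) : (mfact α : K) ≠ 0 := by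
  rw [Nat.cast_ne_zero]
  refine List.prod_ne_zero fun h => ?_
  simp only [List.mem_map] at h
  obtain ⟨i, _, hi⟩ := h
  exact Nat.factorial_ne_zero _ hi

lemma eP_idem : eP K n * eP K n = eP K n := by
  rw [eP, diag_mul]
  congr 1
  funext α
  split <;> simp

lemma theta_eq (δ β : Fin n →₀ ℕ) :
    (XPow δ * (eP K n * DPow β) : Module.End K (MvPolynomial (Fin n) K)) =
      (mfact β : K) • (lcoeff K β).smulRight (monomial δ (1 : K)) := by
  refine endext fun ρ => ?_
  rw [Module.End.mul_apply, Module.End.mul_apply, DPow_monomial, map_smul, map_smul, eP_monomial,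
    LinearMap.smul_apply, LinearMap.smulRight_apply, lcoeff_apply, coeff_monomial]
  by_cases hρβ : ρ = β
  · subst hρβ
    have hd : ((List.finRange n).map fun i => (ρ i).descFactorial (ρ i)).prod = mfact ρ := by
      unfold mfact
      congr 1
      exact List.map_congr_left fun i _ => Nat.descFactorial_self (ρ i)
    rw [tsub_self, if_pos rfl, if_pos rfl, XPow_monomial, add_zero, hd, smul_smul, mul_one]
  · rw [if_neg hρβ, zero_smul, smul_zero]
    by_cases hz : ρ - β = 0
    · rw [hz, if_pos rfl]
      obtain ⟨i, hi⟩ : ∃ i, ρ i ≠ β i := by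
        by_contra hc
        push_neg at hc
        exact hρβ (Finsupp.ext hc)
      have hle : ρ i - β i = 0 := by
        have := DFunLike.congr_fun hz i
        rwa [Finsupp.tsub_apply] at this
      have hlt : ρ i < β i :=
        lt_of_le_of_ne (Nat.sub_eq_zero_iff_le.mp hle) hi
      have h0 : ((List.finRange n).map fun j => (ρ j).descFactorial (β j)).prod = 0 :=
        List.prod_eq_zero (List.mem_map.mpr ⟨i, List.mem_finRange i,
          by rw [Nat.descFactorial_eq_zero_iff_lt.mpr hlt]⟩)
      rw [h0, Nat.cast_zero, zero_smul]
    · rw [if_neg hz, map_zero, smul_zero]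

variable (K n) in
/-- the ideal `F^{⊗n}` -/
noncomputable def FnS : Submodule K ↥(An K n) where
  carrier := {a | ∀ i : Fin n, ∃ m : ℕ, ∀ p : MvPolynomial (Fin n) K,
    (a : Module.End K (MvPolynomial (Fin n) K)) ((X i) ^ m * p) = 0}
  zero_mem' := fun i => ⟨0, fun p => rfl⟩
  add_mem' := by
    intro a b ha hb i
    obtain ⟨m1, h1⟩ := ha i
    obtain ⟨m2, h2⟩ := hb i
    refine ⟨max m1 m2, fun p => ?_⟩
    have k1 : (a : Module.End K (MvPolynomial (Fin n) K)) ((X i) ^ max m1 m2 * p) = 0 := by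
      rw [pow_split i (le_max_left m1 m2)]
      exact h1 _
    have k2 : (b : Module.End K (MvPolynomial (Fin n) K)) ((X i) ^ max m1 m2 * p) = 0 := by
      rw [pow_split i (le_max_right m1 m2)]
      exact h2 _
    show (a : Module.End K (MvPolynomial (Fin n) K)) _ + (b : Module.End K _) _ = 0
    rw [k1, k2, add_zero]
  smul_mem' := by
    intro c a ha i
    obtain ⟨m, hm⟩ := ha i
    refine ⟨m, fun p => ?_⟩
    show c • (a : Module.End K (MvPolynomial (Fin n) K)) _ = 0
    rw [hm, smul_zero]

lemma FnS_twoSided : IsTwoSided (K := K) (A := ↥(An K n)) (FnS K n) := by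
  intro a ha r
  constructor
  · intro i
    obtain ⟨m, hm⟩ := ha i
    refine ⟨m, fun p => ?_⟩
    show (r : Module.End K (MvPolynomial (Fin n) K)) ((a : Module.End K _) _) = 0
    rw [hm p, map_zero]
  · intro i
    obtain ⟨m, hm⟩ := ha i
    obtain ⟨m', hm'⟩ := filter_all r.2 i m
    refine ⟨m', fun p => ?_⟩
    obtain ⟨q, hq⟩ := hm' p
    show (a : Module.End K (MvPolynomial (Fin n) K)) ((r : Module.End K _) _) = 0
    rw [hq, hm q]

/-- subtype elements -/
noncomputable def XPA (α : Fin n →₀ ℕ) : ↥(An K n) := ⟨XPow α, XPow_mem α⟩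
noncomputable def DPA (α : Fin n →₀ ℕ) : ↥(An K n) := ⟨DPow α, DPow_mem α⟩
noncomputable def ePA : ↥(An K n) := ⟨eP K n, eP_mem⟩

@[simp] lemma XPA_val (α : Fin n →₀ ℕ) : ((XPA α : ↥(An K n)) : Module.End K (MvPolynomial (Fin n) K)) = XPow α := rfl
@[simp] lemma DPA_val (α : Fin n →₀ ℕ) : ((DPA α : ↥(An K n)) : Module.End K (MvPolynomial (Fin n) K)) = DPow α := rfl
@[simp] lemma ePA_val : ((ePA : ↥(An K n)) : Module.End K (MvPolynomial (Fin n) K)) = eP K n := rfl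

lemma e_mul_mem (r : ↥(An K n)) : ((ePA : ↥(An K n)) * r) ∈ FnS K n := by
  intro i
  obtain ⟨m', hm'⟩ := filter_all r.2 i 1
  refine ⟨m', fun p => ?_⟩
  obtain ⟨q, hq⟩ := hm' p
  show eP K n ((r : Module.End K (MvPolynomial (Fin n) K)) _) = 0
  rw [hq, pow_one, eP_kills]

lemma eA_mem : (ePA : ↥(An K n)) ∈ FnS K n := by
  have := e_mul_mem (K := K) (n := n) 1
  rwa [mul_one] at this

lemma exists_monomial_ne (a : ↥(An K n)) (ha : a ≠ 0) :
    ∃ γ, (a : Module.End K (MvPolynomial (Fin n) K)) (monomial γ (1 : K)) ≠ 0 := by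
  by_contra h
  push_neg at h
  refine ha (Subtype.ext (endext fun γ => ?_))
  rw [h γ]
  rfl

lemma decomp (a : ↥(An K n)) (ha : a ∈ FnS K n) :
    ∃ S : Finset (Fin n →₀ ℕ),
      a = ∑ α ∈ S, (mfact α : K)⁻¹ •
        ((a * XPA α * ePA) *
          ((ePA : ↥(An K n)) * DPA α)) := by
  classical
  choose m hm using ha
  set μ : Fin n →₀ ℕ := Finsupp.equivFunOnFinite.symm m with hμ
  refine ⟨Finset.Iic μ, Subtype.ext ?_⟩
  rw [AddSubmonoidClass.coe_finset_sum]
  refine endext fun β => ?_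
  have hterm : ∀ α : Fin n →₀ ℕ,
      (((mfact α : K)⁻¹ •
        ((a * XPA α * ePA) * ((ePA : ↥(An K n)) * DPA α)) : ↥(An K n)).val)
        (monomial β (1 : K)) =
      if β = α then (a : Module.End K (MvPolynomial (Fin n) K)) (monomial β (1 : K)) else 0 := by
    intro α
    have hval : ((a * XPA α * ePA) * ((ePA : ↥(An K n)) * DPA α)).val =
        (a.val * (XPow α * (eP K n * DPow α)) : Module.End K (MvPolynomial (Fin n) K)) := by
      show (a.val * XPow α * eP K n) * (eP K n * DPow α) = _
      rw [mul_assoc, mul_assoc, ← mul_assoc (eP K n), eP_idem, ← mul_assoc (XPow α)]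
    show ((mfact α : K)⁻¹ •
        (((a * XPA α * ePA) * ((ePA : ↥(An K n)) * DPA α)).val)) (monomial β (1 : K)) = _
    rw [hval, LinearMap.smul_apply, Module.End.mul_apply, theta_eq, LinearMap.smul_apply,
      LinearMap.smulRight_apply, lcoeff_apply, coeff_monomial]
    by_cases hβα : β = α
    · rw [if_pos hβα, if_pos hβα, one_smul, map_smul, smul_smul,
        inv_mul_cancel₀ (mfact_ne_zero α), one_smul, hβα]
    · rw [if_neg hβα, if_neg hβα, zero_smul, smul_zero, map_zero, smul_zero]
  calc (a : Module.End K (MvPolynomial (Fin n) K)) (monomial β (1 : K))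
      = if β ∈ Finset.Iic μ then
          (a : Module.End K (MvPolynomial (Fin n) K)) (monomial β (1 : K)) else 0 := by
        split
        · rfl
        · rename_i hβ
          obtain ⟨i, hi⟩ : ∃ i, μ i < β i := by
            by_contra hc
            push_neg at hc
            exact hβ (Finset.mem_Iic.mpr (Finsupp.le_def.mpr hc))
          have hmi : m i ≤ β i := by
            have : μ i = m i := rfl
            omega
          have hmono : (monomial β (1 : K) : MvPolynomial (Fin n) K) =
              (X i) ^ (m i) * monomial (β - Finsupp.single i (m i)) (1 : K) := by
            rw [X_pow_mul_monomial, add_tsub_cancel_of_le (Finsupp.single_le_iff.mpr hmi)]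
          rw [hmono, hm i]
    _ = ∑ α ∈ Finset.Iic μ, if β = α then
          (a : Module.End K (MvPolynomial (Fin n) K)) (monomial β (1 : K)) else 0 :=
        (Finset.sum_ite_eq (Finset.Iic μ) β fun _ =>
          (a : Module.End K (MvPolynomial (Fin n) K)) (monomial β (1 : K))).symm
    _ = _ := by
        rw [LinearMap.sum_apply]
        exact Finset.sum_congr rfl fun α _ => (hterm α).symm


lemma ePA_ne_zero : (ePA : ↥(An K n)) ≠ 0 := by
  intro h
  have h0 : eP K n = 0 := congrArg Subtype.val h
  have h1 : eP K n (monomial (0 : Fin n →₀ ℕ) (1 : K)) = 0 := by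
    rw [h0]
    rfl
  rw [eP_monomial, if_pos rfl] at h1
  exact one_ne_zero ((monomial_eq_zero).mp h1)

lemma FnS_ne_bot : FnS K n ≠ ⊥ := by
  intro h
  have h1 := eA_mem (K := K) (n := n)
  rw [h, Submodule.mem_bot] at h1
  exact ePA_ne_zero h1

lemma FnS_idem : FnS K n * FnS K n = FnS K n := by
  refine le_antisymm (Submodule.mul_le.mpr fun x hx y hy => ?_) fun a ha => ?_
  · intro i
    obtain ⟨m, hm⟩ := hy i
    refine ⟨m, fun p => ?_⟩
    show (x : Module.End K (MvPolynomial (Fin n) K)) ((y : Module.End K _) _) = 0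
    rw [hm p, map_zero]
  · obtain ⟨S, hS⟩ := decomp a ha
    rw [hS]
    refine Submodule.sum_mem _ fun α _ => Submodule.smul_mem _ _ ?_
    exact Submodule.mul_mem_mul ((FnS_twoSided _ eA_mem (a * XPA α)).1) (e_mul_mem (DPA α))

lemma e_in_I (I : Submodule K ↥(An K n)) (hI : IsTwoSided (K := K) (A := ↥(An K n)) I) (hne : I ≠ ⊥) :
    (ePA : ↥(An K n)) ∈ I := by
  obtain ⟨b, hbI, hb0⟩ := (Submodule.ne_bot_iff _).mp hne
  obtain ⟨γ, hγ⟩ := exists_monomial_ne b hb0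
  obtain ⟨β, hβ⟩ := MvPolynomial.ne_zero_iff.mp hγ
  set c : K := (mfact β : K) *
    coeff β ((b : Module.End K (MvPolynomial (Fin n) K)) (monomial γ (1 : K))) with hc
  have hcne : c ≠ 0 := mul_ne_zero (mfact_ne_zero β) hβ
  set s : ↥(An K n) := ((ePA * DPA β) * b) * (XPA γ * ePA) with hs
  have hsI : s ∈ I := (hI _ ((hI b hbI (ePA * DPA β)).1) (XPA γ * ePA)).2
  have hsval : (s : ↥(An K n)).val = c • eP K n := by
    have hedp : (eP K n * DPow β : Module.End K (MvPolynomial (Fin n) K)) =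
        (mfact β : K) • (lcoeff K β).smulRight (monomial 0 (1 : K)) := by
      rw [← theta_eq, XPow_zero, one_mul]
    show (eP K n * DPow β * b.val) * (XPow γ * eP K n) = c • eP K n
    refine endext fun ρ => ?_
    simp only [Module.End.mul_apply, LinearMap.smul_apply]
    rw [eP_monomial]
    by_cases hρ : ρ = 0
    · subst hρ
      rw [if_pos rfl, XPow_monomial, add_zero, ← Module.End.mul_apply (eP K n) (DPow β), hedp,
        LinearMap.smul_apply, LinearMap.smulRight_apply, lcoeff_apply, smul_smul, ← hc]
    · rw [if_neg hρ]
      simp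
  have heq : (ePA : ↥(An K n)) = c⁻¹ • s := by
    refine Subtype.ext ?_
    show eP K n = c⁻¹ • (s : ↥(An K n)).val
    rw [hsval, smul_smul, inv_mul_cancel₀ hcne, one_smul]
  rw [heq]
  exact Submodule.smul_mem _ _ hsI

lemma FnS_le (I : Submodule K ↥(An K n)) (hI : IsTwoSided (K := K) (A := ↥(An K n)) I) (hne : I ≠ ⊥) : FnS K n ≤ I := by
  intro a ha
  obtain ⟨S, hS⟩ := decomp a ha
  rw [hS]
  refine Submodule.sum_mem _ fun α _ => Submodule.smul_mem _ _ ?_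
  exact (hI _ ((hI _ (e_in_I I hI hne) (a * XPA α)).1) (ePA * DPA α)).2

lemma An_prime (a b : ↥(An K n)) (h : ∀ r : ↥(An K n), a * r * b = 0) : a = 0 ∨ b = 0 := by
  by_contra hc
  push_neg at hc
  obtain ⟨ha, hb⟩ := hc
  obtain ⟨δ, hδ⟩ := exists_monomial_ne a ha
  obtain ⟨γ, hγ⟩ := exists_monomial_ne b hb
  obtain ⟨β, hβ⟩ := MvPolynomial.ne_zero_iff.mp hγ
  have h0 := h (XPA δ * (ePA * DPA β))
  have h1 : (a * (XPA δ * (ePA * DPA β)) * b).val (monomial γ (1 : K)) = 0 := by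
    rw [h0]
    rfl
  have hval : (a * (XPA δ * (ePA * DPA β)) * b).val =
      a.val * ((XPow δ * (eP K n * DPow β) : Module.End K (MvPolynomial (Fin n) K)) * b.val) := by
    show a.val * (XPow δ * (eP K n * DPow β)) * b.val = _
    rw [mul_assoc]
  have h2 : (a * (XPA δ * (ePA * DPA β)) * b).val (monomial γ (1 : K)) =
      ((mfact β : K) * coeff β ((b : Module.End K (MvPolynomial (Fin n) K))
        (monomial γ (1 : K)))) •
        (a : Module.End K (MvPolynomial (Fin n) K)) (monomial δ (1 : K)) := by
    rw [hval, Module.End.mul_apply, Module.End.mul_apply, theta_eq, LinearMap.smul_apply,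
      LinearMap.smulRight_apply, lcoeff_apply, map_smul, map_smul, smul_smul]
  rw [h1] at h2
  have h3 := (smul_eq_zero.mp h2.symm).resolve_left
    (mul_ne_zero (mfact_ne_zero β) hβ)
  exact hδ h3

end Aux

/-- `F^{⊗n}` (the operators in `𝔸ₙ` vanishing on `xᵢ^m·Pₙ` for large `m`,
for every `i`) is the smallest nonzero two-sided ideal of `𝔸ₙ`, it is idempotent, and
consequently `𝔸ₙ` is a prime ring. -/
theorem stmt5 (K : Type*) [Field K] [CharZero K] (n : ℕ) :
    ∃ Fn : Submodule K ↥(An K n),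
      (Fn : Set ↥(An K n)) = {a | ∀ i : Fin n, a ∈ pCar K n i} ∧
      IsTwoSided (K := K) (A := ↥(An K n)) Fn ∧ Fn ≠ ⊥ ∧ Fn * Fn = Fn ∧
      (∀ I : Submodule K ↥(An K n), IsTwoSided (K := K) (A := ↥(An K n)) I → I ≠ ⊥ → Fn ≤ I) ∧
      (∀ a b : ↥(An K n), (∀ r : ↥(An K n), a * r * b = 0) → a = 0 ∨ b = 0) :=
  ⟨FnS K n, rfl, FnS_twoSided, FnS_ne_bot, FnS_idem, FnS_le, An_prime⟩
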